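/- Let T₁, T₂ be polynomials and let y, ỹ be polynomials satisfying the discrete Wronskian equation Wr⁺(y,ỹ)(x) := y(x)ỹ(x+h) − ỹ(x)y(x+h) = T₁(x)/T₂(x) (assumed a polynomial). Then the two rational functions E(x) = T₁(x)y(x+h)/(T₁(x+h)y(x)) + T₂(x)y(x−h)/(T₂(x+h)y(x)) and Ẽ(x) = T₁(x)ỹ(x+h)/(T₁(x+h)ỹ(x)) + T₂(x)ỹ(x−h)/(T₂(x+h)ỹ(x)) are equal. -/

import Mathlib

open Polynomial

noncomputable def rf (p : Polynomial ℂ) : RatFunc ℂ := algebraMap (Polynomial ℂ) (RatFunc ℂ) p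

lemma comp_inv (h : ℂ) (f : Polynomial ℂ) : (f.comp (X + C h)).comp (X - C h) = f := by
  rw [comp_assoc]; simp

lemma comp_ne (h : ℂ) (f : Polynomial ℂ) (hf : f ≠ 0) : f.comp (X - C h) ≠ 0 := by
  intro hc
  apply hf
  have := congrArg (fun g => g.comp (X + C h)) hc
  simpa [comp_assoc] using this

lemma rf_ne (p : Polynomial ℂ) (hp : p ≠ 0) : rf p ≠ 0 := by simp [rf, hp]

/-- if Wr⁺(y,ỹ)(x) = y(x)ỹ(x+h) − ỹ(x)y(x+h) = T₁/T₂ (a polynomial),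
then the gl₂ transfer-matrix eigenvalue expressions
E = T₁·y[1]/(T₁[1]·y) + T₂·y[−1]/(T₂[1]·y) attached to y and to ỹ coincide as
rational functions.  Here f[1](x) = f(x−h) is comp (X − C h) and f[−1](x) = f(x+h)
is comp (X + C h). -/
theorem gl2_eigenvalue_invariance (h : ℂ) (hh : h ≠ 0)
    (T1 T2 y yt : Polynomial ℂ) (hT1 : T1 ≠ 0) (hT2 : T2 ≠ 0)
    (hy : y ≠ 0) (hyt : yt ≠ 0)
    (hwr : (y * yt.comp (Polynomial.X + Polynomial.C h)
            - yt * y.comp (Polynomial.X + Polynomial.C h)) * T2 = T1) :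
    rf T1 * rf (y.comp (Polynomial.X - Polynomial.C h)) /
        (rf (T1.comp (Polynomial.X - Polynomial.C h)) * rf y)
      + rf T2 * rf (y.comp (Polynomial.X + Polynomial.C h)) /
        (rf (T2.comp (Polynomial.X - Polynomial.C h)) * rf y)
    = rf T1 * rf (yt.comp (Polynomial.X - Polynomial.C h)) /
        (rf (T1.comp (Polynomial.X - Polynomial.C h)) * rf yt)
      + rf T2 * rf (yt.comp (Polynomial.X + Polynomial.C h)) /
        (rf (T2.comp (Polynomial.X - Polynomial.C h)) * rf yt) := by
  have hWm : (y.comp (X - C h) * yt - yt.comp (X - C h) * y) * T2.comp (X - C h)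
      = T1.comp (X - C h) := by
    have := congrArg (fun g => g.comp (X - C h)) hwr
    simpa [mul_comp, sub_comp, comp_inv] using this
  have hWm0 : y.comp (X - C h) * yt - yt.comp (X - C h) * y ≠ 0 := by
    intro hc
    exact comp_ne h T1 hT1 (by rw [← hWm, hc, zero_mul])
  have e1 : rf T1 = (rf y * rf (yt.comp (X + C h)) - rf yt * rf (y.comp (X + C h))) * rf T2 := by
    rw [← hwr]; simp only [rf, map_mul, map_sub]
  have e2 : rf (T1.comp (X - C h))
      = (rf (y.comp (X - C h)) * rf yt - rf (yt.comp (X - C h)) * rf y)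
        * rf (T2.comp (X - C h)) := by
    rw [← hWm]; simp only [rf, map_mul, map_sub]
  have n1 : rf y ≠ 0 := rf_ne _ hy
  have n2 : rf yt ≠ 0 := rf_ne _ hyt
  have n3 : rf (T2.comp (X - C h)) ≠ 0 := rf_ne _ (comp_ne h T2 hT2)
  have n4 : rf (y.comp (X - C h)) * rf yt - rf (yt.comp (X - C h)) * rf y ≠ 0 := by
    have := rf_ne _ hWm0
    simpa [rf, map_mul, map_sub] using this
  have n5 : rf yt * rf (y.comp (X - C h)) - rf y * rf (yt.comp (X - C h)) ≠ 0 := by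
    rwa [mul_comm (rf yt), mul_comm (rf y)]
  rw [e1, e2]
  field_simp
  ring
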